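/- Inadmissibility of axiom J: there is no closed term t with ⊢ t : ◇◇ι → ◇ι in the calculus SLC, and there is no closed term t with ⊢ t : ◇◇ι → ◇ι in the calculus RLC; hence the join axiom J is not derivable in SLC or RLC. -/

import Mathlib

/-- Types (shared by SLC and RLC): base, unit, products, functions, ◇. -/
inductive Ty : Type
  | base : Ty
  | unit : Ty
  | prod : Ty → Ty → Ty
  | arr : Ty → Ty → Ty
  | dia : Ty → Ty

/-- Typing contexts (de Bruijn; the head is the most recently bound variable). -/
abbrev Ctx := List Ty

/-- Raw terms of SLC (with the letmap construct). -/
inductive TmS : Type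
  | var : ℕ → TmS
  | unit : TmS
  | pair : TmS → TmS → TmS
  | fst : TmS → TmS
  | snd : TmS → TmS
  | lam : TmS → TmS
  | app : TmS → TmS → TmS
  | letm : TmS → TmS → TmS        -- letmap x = t in u

/-- Raw terms of RLC (with the return and letmap constructs). -/
inductive TmR : Type
  | var : ℕ → TmR
  | unit : TmR
  | pair : TmR → TmR → TmR
  | fst : TmR → TmR
  | snd : TmR → TmR
  | lam : TmR → TmR
  | app : TmR → TmR → TmR
  | ret : TmR → TmR               -- return t
  | letm : TmR → TmR → TmR        -- letmap x = t in u

/-- The typing judgment `Γ ⊢ t : A` of SLC. -/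
inductive HasTyS : Ctx → TmS → Ty → Prop
  | var {Γ n A} : Γ[n]? = some A → HasTyS Γ (.var n) A
  | unit {Γ} : HasTyS Γ .unit .unit
  | pair {Γ t u A B} : HasTyS Γ t A → HasTyS Γ u B → HasTyS Γ (.pair t u) (.prod A B)
  | fst {Γ t A B} : HasTyS Γ t (.prod A B) → HasTyS Γ (.fst t) A
  | snd {Γ t A B} : HasTyS Γ t (.prod A B) → HasTyS Γ (.snd t) B
  | lam {Γ t A B} : HasTyS (A :: Γ) t B → HasTyS Γ (.lam t) (.arr A B)
  | app {Γ t u A B} : HasTyS Γ t (.arr A B) → HasTyS Γ u A → HasTyS Γ (.app t u) B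
  | letm {Γ t u A B} : HasTyS Γ t (.dia A) → HasTyS (A :: Γ) u B →
      HasTyS Γ (.letm t u) (.dia B)

/-- The typing judgment `Γ ⊢ t : A` of RLC. -/
inductive HasTyR : Ctx → TmR → Ty → Prop
  | var {Γ n A} : Γ[n]? = some A → HasTyR Γ (.var n) A
  | unit {Γ} : HasTyR Γ .unit .unit
  | pair {Γ t u A B} : HasTyR Γ t A → HasTyR Γ u B → HasTyR Γ (.pair t u) (.prod A B)
  | fst {Γ t A B} : HasTyR Γ t (.prod A B) → HasTyR Γ (.fst t) A
  | snd {Γ t A B} : HasTyR Γ t (.prod A B) → HasTyR Γ (.snd t) B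
  | lam {Γ t A B} : HasTyR (A :: Γ) t B → HasTyR Γ (.lam t) (.arr A B)
  | app {Γ t u A B} : HasTyR Γ t (.arr A B) → HasTyR Γ u A → HasTyR Γ (.app t u) B
  | ret {Γ t A} : HasTyR Γ t A → HasTyR Γ (.ret t) (.dia A)
  | letm {Γ t u A B} : HasTyR Γ t (.dia A) → HasTyR (A :: Γ) u B →
      HasTyR Γ (.letm t u) (.dia B)

/-- Semantic countermodel: truth values graded by a natural number level. -/
def sem : Ty → ℕ → Prop
  | .base, n => 2 ≤ n
  | .unit, _ => True
  | .prod A B, n => sem A n ∧ sem B n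
  | .arr A B, n => ∀ m, n ≤ m → sem A m → sem B m
  | .dia A, n => sem A (n + 1)

lemma sem_mono : ∀ (A : Ty) {n m : ℕ}, n ≤ m → sem A n → sem A m
  | .base, n, m, h, h2 => le_trans h2 h
  | .unit, _, _, _, _ => trivial
  | .prod A B, n, m, h, ⟨ha, hb⟩ => ⟨sem_mono A h ha, sem_mono B h hb⟩
  | .arr A B, n, m, h, f => fun k hk ha => f k (le_trans h hk) ha
  | .dia A, n, m, h, ha => sem_mono A (Nat.succ_le_succ h) ha

/-- Interpretation of contexts. -/
def semCtx : Ctx → ℕ → Prop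
  | [], _ => True
  | A :: Γ, n => sem A n ∧ semCtx Γ n

lemma semCtx_mono : ∀ (Γ : Ctx) {n m : ℕ}, n ≤ m → semCtx Γ n → semCtx Γ m
  | [], _, _, _, _ => trivial
  | A :: Γ, n, m, h, ⟨ha, hΓ⟩ => ⟨sem_mono A h ha, semCtx_mono Γ h hΓ⟩

lemma semCtx_get : ∀ (Γ : Ctx) (i : ℕ) (A : Ty) (n : ℕ),
    Γ[i]? = some A → semCtx Γ n → sem A n
  | [], i, A, n, h, _ => by simp at h
  | B :: Γ, 0, A, n, h, hΓ => by
      simp at h; exact h ▸ hΓ.1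
  | B :: Γ, i + 1, A, n, h, hΓ => semCtx_get Γ i A n h hΓ.2

lemma soundR {Γ t A} (h : HasTyR Γ t A) : ∀ n, semCtx Γ n → sem A n := by
  induction h with
  | var hg => exact fun n hΓ => semCtx_get _ _ _ n hg hΓ
  | unit => exact fun _ _ => trivial
  | pair _ _ ih1 ih2 => exact fun n hΓ => ⟨ih1 n hΓ, ih2 n hΓ⟩
  | fst _ ih => exact fun n hΓ => (ih n hΓ).1
  | snd _ ih => exact fun n hΓ => (ih n hΓ).2
  | lam _ ih => exact fun n hΓ m hm ha => ih m ⟨ha, semCtx_mono _ hm hΓ⟩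
  | app _ _ ih1 ih2 => exact fun n hΓ => ih1 n hΓ n le_rfl (ih2 n hΓ)
  | ret _ ih => exact fun n hΓ => show sem _ (n + 1) from sem_mono _ (Nat.le_succ n) (ih n hΓ)
  | letm _ _ ih1 ih2 =>
      exact fun n hΓ => ih2 (n + 1) ⟨ih1 n hΓ, semCtx_mono _ (Nat.le_succ n) hΓ⟩

/-- Embedding of SLC terms into RLC terms. -/
def emb : TmS → TmR
  | .var n => .var n
  | .unit => .unit
  | .pair t u => .pair (emb t) (emb u)
  | .fst t => .fst (emb t)
  | .snd t => .snd (emb t)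
  | .lam t => .lam (emb t)
  | .app t u => .app (emb t) (emb u)
  | .letm t u => .letm (emb t) (emb u)

lemma emb_hasTy {Γ t A} (h : HasTyS Γ t A) : HasTyR Γ (emb t) A := by
  induction h with
  | var hg => exact .var hg
  | unit => exact .unit
  | pair _ _ ih1 ih2 => exact .pair ih1 ih2
  | fst _ ih => exact .fst ih
  | snd _ ih => exact .snd ih
  | lam _ ih => exact .lam ih
  | app _ _ ih1 ih2 => exact .app ih1 ih2
  | letm _ _ ih1 ih2 => exact .letm ih1 ih2

lemma noR : ¬ ∃ t : TmR, HasTyR [] t (.arr (.dia (.dia .base)) (.dia .base)) := by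
  rintro ⟨t, ht⟩
  have h := soundR ht 0 trivial 0 le_rfl
  simp [sem] at h

/-- inadmissibility of axiom J: there is no closed term of type
`◇◇ι → ◇ι` in SLC, and none in RLC. -/

theorem join_axiom_inadmissible :
    (¬ ∃ t : TmS, HasTyS [] t (.arr (.dia (.dia .base)) (.dia .base))) ∧
    (¬ ∃ t : TmR, HasTyR [] t (.arr (.dia (.dia .base)) (.dia .base))) := by
  exact ⟨fun ⟨t, ht⟩ => noR ⟨emb t, emb_hasTy ht⟩, noR⟩
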